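/- Let a, T, D be real with a ≠ 0, ŷ₁ < 0, and W(y) = Dy² - aTy + a². Suppose P is real analytic near 0 with P(0) = ŷ₁, satisfying P'(y₀)·P(y₀)·W(y₀) = y₀·W(P(y₀)) near 0. Then P'(0) = 0 and P''(0) = W(ŷ₁)/(a² ŷ₁), i.e. the Taylor expansion begins P(y₀) = ŷ₁ + (W(ŷ₁)/(2a²ŷ₁)) y₀² + (T W(ŷ₁)/(3a³ŷ₁)) y₀³ + O(y₀⁴). -/

import Mathlib

open Real Set Filter Asymptotics

private lemma analyticAt_deriv' {f : ℝ → ℝ} {x : ℝ} (h : AnalyticAt ℝ f x) :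
    AnalyticAt ℝ (deriv f) x := by
  obtain ⟨s, hs, hf⟩ := h.exists_mem_nhds_analyticOnNhd
  exact hf.deriv x (mem_of_mem_nhds hs)

private lemma coeff_eq_iteratedDeriv' {P : ℝ → ℝ} {p : FormalMultilinearSeries ℝ ℝ ℝ}
    {r : ENNReal} (h : HasFPowerSeriesOnBall P p 0 r) (n : ℕ) :
    (n.factorial : ℝ) * p.coeff n = iteratedDeriv n P 0 := by
  have h2 := h.factorial_smul (1:ℝ) n
  rw [iteratedDeriv_eq_iteratedFDeriv, ← h2, FormalMultilinearSeries.coeff, nsmul_eq_mul]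
  norm_num

theorem taylor_halfmap_origin_nonzero (a T D yhat₁ : ℝ) (ha : a ≠ 0) (hyhat₁ : yhat₁ < 0)
    (W : ℝ → ℝ) (hW : ∀ y, W y = D * y ^ 2 - a * T * y + a ^ 2)
    (P : ℝ → ℝ) (hPanal : AnalyticAt ℝ P 0) (hP0 : P 0 = yhat₁)
    (hODE : ∀ᶠ y₀ in nhds 0, deriv P y₀ * P y₀ * W y₀ = y₀ * W (P y₀)) :
    deriv P 0 = 0 ∧ deriv (deriv P) 0 = W yhat₁ / (a ^ 2 * yhat₁) ∧
    (fun y₀ : ℝ =>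
        P y₀ - (yhat₁ + (W yhat₁ / (2 * a ^ 2 * yhat₁)) * y₀ ^ 2 +
          (T * W yhat₁ / (3 * a ^ 3 * yhat₁)) * y₀ ^ 3))
      =O[nhds 0] fun y₀ : ℝ => y₀ ^ 4 := by
  have hy0 : yhat₁ ≠ 0 := ne_of_lt hyhat₁
  simp only [hW] at hODE
  -- eventual analyticity
  have hA : ∀ᶠ y in nhds (0:ℝ), AnalyticAt ℝ P y := hPanal.eventually_analyticAt
  have hA1 : ∀ᶠ y in nhds (0:ℝ), AnalyticAt ℝ (deriv P) y :=
    hA.mono fun y hy => analyticAt_deriv' hy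
  have hA2 : ∀ᶠ y in nhds (0:ℝ), AnalyticAt ℝ (deriv (deriv P)) y :=
    hA1.mono fun y hy => analyticAt_deriv' hy
  have hpoly : ∀ y : ℝ, HasDerivAt (fun z : ℝ => D * z ^ 2 - a * T * z + a ^ 2)
      (2 * D * y - a * T) y := by
    intro y
    have h1 : HasDerivAt (fun z : ℝ => z ^ 2) (2 * y) y := by
      simpa using hasDerivAt_pow 2 y
    have h := ((h1.const_mul D).sub ((hasDerivAt_id y).const_mul (a * T))).add_const (a ^ 2)
    simpa using h.congr_deriv (by ring)
  -- E0 at 0: c1 = 0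
  have hODE0 := hODE.self_of_nhds
  simp only [hP0] at hODE0
  have hc1 : deriv P 0 = 0 := by
    have ha2 : a ^ 2 ≠ 0 := pow_ne_zero 2 ha
    have : deriv P 0 * yhat₁ * a ^ 2 = 0 := by
      have := hODE0; nlinarith [this]
    rcases mul_eq_zero.1 this with h | h
    · rcases mul_eq_zero.1 h with h' | h'
      · exact h'
      · exact absurd h' hy0
    · exact absurd h ha2
  -- first differentiation
  have hE0 : (fun y => deriv P y * P y * (D * y ^ 2 - a * T * y + a ^ 2)) =ᶠ[nhds 0]
      (fun y => y * (D * P y ^ 2 - a * T * P y + a ^ 2)) := hODE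
  have hD1 := hE0.deriv
  have hE1 : ∀ᶠ y in nhds (0:ℝ),
      (deriv (deriv P) y * P y + deriv P y * deriv P y) * (D * y ^ 2 - a * T * y + a ^ 2)
        + deriv P y * P y * (2 * D * y - a * T)
      = (D * P y ^ 2 - a * T * P y + a ^ 2)
        + y * ((2 * D * P y - a * T) * deriv P y) := by
    filter_upwards [hD1, hA, hA1] with y hy hPy hdPy
    have hP' : HasDerivAt P (deriv P y) y := hPy.differentiableAt.hasDerivAt
    have hdP' : HasDerivAt (deriv P) (deriv (deriv P) y) y := hdPy.differentiableAt.hasDerivAt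
    have e1 := ((hdP'.mul hP').mul (hpoly y)).deriv
    have e2 := ((hasDerivAt_id y).mul
      (((hP'.pow 2).const_mul D).sub (hP'.const_mul (a * T)) |>.add_const (a ^ 2))).deriv
    simp only [id_eq] at e2
    erw [e1, e2] at hy
    simp only [Pi.mul_apply, Pi.sub_apply, Pi.add_apply, Pi.pow_apply] at hy
    push_cast at hy
    norm_num at hy
    linear_combination hy
  -- E1 at 0 gives c2
  have hE10 := hE1.self_of_nhds
  simp only [hP0] at hE10
  rw [hc1] at hE10
  have ha2 : a ^ 2 ≠ 0 := pow_ne_zero 2 ha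
  have ha3 : a ^ 3 ≠ 0 := pow_ne_zero 3 ha
  have hc2W : deriv (deriv P) 0 * (a ^ 2 * yhat₁) = D * yhat₁ ^ 2 - a * T * yhat₁ + a ^ 2 := by
    linear_combination hE10
  have hc2 : deriv (deriv P) 0 = W yhat₁ / (a ^ 2 * yhat₁) := by
    rw [eq_div_iff (mul_ne_zero ha2 hy0), hW]
    exact hc2W
  -- second differentiation
  have hE1' : (fun y => (deriv (deriv P) y * P y + deriv P y * deriv P y) *
        (D * y ^ 2 - a * T * y + a ^ 2) + deriv P y * P y * (2 * D * y - a * T)) =ᶠ[nhds 0]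
      (fun y => (D * P y ^ 2 - a * T * P y + a ^ 2)
        + y * ((2 * D * P y - a * T) * deriv P y)) := hE1
  have hD2 := hE1'.deriv
  have hc3 : deriv (deriv (deriv P)) 0 = 2 * T * W yhat₁ / (a ^ 3 * yhat₁) := by
    have hy := hD2.self_of_nhds
    have hP' : HasDerivAt P (deriv P 0) 0 := hPanal.differentiableAt.hasDerivAt
    have hdP' : HasDerivAt (deriv P) (deriv (deriv P) 0) 0 :=
      (analyticAt_deriv' hPanal).differentiableAt.hasDerivAt
    have hddP' : HasDerivAt (deriv (deriv P)) (deriv (deriv (deriv P)) 0) 0 :=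
      (analyticAt_deriv' (analyticAt_deriv' hPanal)).differentiableAt.hasDerivAt
    have hlin : HasDerivAt (fun z : ℝ => 2 * D * z - a * T) (2 * D) 0 := by
      simpa using (((hasDerivAt_id (0:ℝ)).const_mul (2 * D)).sub_const (a * T)).congr_deriv
        (by ring)
    have e1 := ((((hddP'.mul hP').add (hdP'.mul hdP')).mul (hpoly 0)).add
      ((hdP'.mul hP').mul hlin)).deriv
    have e2 := (((((hP'.pow 2).const_mul D).sub (hP'.const_mul (a * T))).add_const (a ^ 2)).add
      ((hasDerivAt_id (0:ℝ)).mul ((hP'.const_mul (2 * D)).sub_const (a * T) |>.mul hdP'))).deriv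
    simp only [id_eq] at e2
    erw [e1, e2] at hy
    simp only [Pi.mul_apply, Pi.sub_apply, Pi.add_apply, Pi.pow_apply] at hy
    push_cast at hy
    rw [hP0, hc1] at hy
    rw [eq_div_iff (mul_ne_zero ha3 hy0), hW]
    linear_combination a * hy + 2 * T * hc2W
  refine ⟨hc1, hc2, ?_⟩
  -- Big O part
  obtain ⟨p, hp⟩ := hPanal
  have hbig := hp.isBigO_sub_partialSum_pow 4
  obtain ⟨r, hball⟩ := hp
  have k0 := coeff_eq_iteratedDeriv' hball 0
  have k1 := coeff_eq_iteratedDeriv' hball 1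
  have k2 := coeff_eq_iteratedDeriv' hball 2
  have k3 := coeff_eq_iteratedDeriv' hball 3
  rw [iteratedDeriv_zero, hP0] at k0
  rw [iteratedDeriv_one, hc1] at k1
  have i2 : iteratedDeriv 2 P 0 = deriv (deriv P) 0 := by
    simp [iteratedDeriv_succ, iteratedDeriv_zero]
  have i3 : iteratedDeriv 3 P 0 = deriv (deriv (deriv P)) 0 := by
    simp [iteratedDeriv_succ, iteratedDeriv_zero]
  rw [i2, hc2] at k2
  rw [i3, hc3] at k3
  have hps : ∀ y : ℝ, p.partialSum 4 y =
      yhat₁ + (W yhat₁ / (2 * a ^ 2 * yhat₁)) * y ^ 2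
        + (T * W yhat₁ / (3 * a ^ 3 * yhat₁)) * y ^ 3 := by
    intro y
    have e : p.partialSum 4 y = p.coeff 0 * y ^ 0 + p.coeff 1 * y ^ 1
        + p.coeff 2 * y ^ 2 + p.coeff 3 * y ^ 3 := by
      simp [FormalMultilinearSeries.partialSum, Finset.sum_range_succ,
        FormalMultilinearSeries.apply_eq_pow_smul_coeff, smul_eq_mul]
      ring
    rw [e]
    have hc0' : p.coeff 0 = yhat₁ := by simpa using k0
    have hc1' : p.coeff 1 = 0 := by
      have h1 : (1:ℝ) * p.coeff 1 = 0 := by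
        norm_num [Nat.factorial] at k1
        simpa using k1
      linarith
    have hc2'' : p.coeff 2 = W yhat₁ / (2 * a ^ 2 * yhat₁) := by
      have h2 : (2:ℝ) * p.coeff 2 = W yhat₁ / (a ^ 2 * yhat₁) := by
        norm_num [Nat.factorial] at k2
        convert k2 using 2
      rw [eq_div_iff (by exact mul_ne_zero (mul_ne_zero two_ne_zero ha2) hy0)]
      rw [eq_div_iff (mul_ne_zero ha2 hy0)] at h2
      linear_combination h2
    have hc3'' : p.coeff 3 = T * W yhat₁ / (3 * a ^ 3 * yhat₁) := by
      have h3 : (6:ℝ) * p.coeff 3 = 2 * T * W yhat₁ / (a ^ 3 * yhat₁) := by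
        norm_num [Nat.factorial] at k3
        convert k3 using 2
      rw [eq_div_iff (by exact mul_ne_zero (mul_ne_zero three_ne_zero ha3) hy0)]
      rw [eq_div_iff (mul_ne_zero ha3 hy0)] at h3
      linear_combination h3 / 2
    rw [hc0', hc1', hc2'', hc3'']
    ring
  have hbig' : (fun y : ℝ => P y - (yhat₁ + (W yhat₁ / (2 * a ^ 2 * yhat₁)) * y ^ 2
      + (T * W yhat₁ / (3 * a ^ 3 * yhat₁)) * y ^ 3)) =O[nhds 0] fun y : ℝ => ‖y‖ ^ 4 := by
    refine hbig.congr' ?_ (by rfl)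
    filter_upwards with y
    rw [zero_add, hps y]
  refine hbig'.trans (Filter.EventuallyEq.isBigO ?_)
  filter_upwards with y
  rw [Real.norm_eq_abs, pow_abs, abs_of_nonneg (by positivity)]
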